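/- Let γ = (p₀, c₀, p₁, c₁, …, c_{l−1}, p_l, c_l, p_{l+1}) be a gallery in a building X which has the type of a minimal gallery. Then γ is minimal if and only if for all 1 ≤ j ≤ l, one has c_{j−1} = gate_{c₀}(p_j) and c_j ≠ c_{j−1}. -/

import Mathlib

/-- A building of type `(W,S)`, encoded by its Weyl-distance function `δ` on the set `C` of
alcoves (chambers), where `(W,S)` is presented by the Coxeter system `cs`. -/
structure IsWeylBuilding {C B W : Type*} [Group W] {M : CoxeterMatrix B}
    (cs : CoxeterSystem M W) (δ : C → C → W) : Prop where
  eq_one_iff : ∀ c d, δ c d = 1 ↔ c = d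
  symm : ∀ c d, δ d c = (δ c d)⁻¹
  step : ∀ (c d e : C) (i : B), δ d e = cs.simple i →
    δ c e = δ c d * cs.simple i ∨ δ c e = δ c d
  step_reduced : ∀ (c d e : C) (i : B), δ d e = cs.simple i →
    cs.length (δ c d * cs.simple i) = cs.length (δ c d) + 1 →
    δ c e = δ c d * cs.simple i
  exists_adj : ∀ (c d : C) (i : B), ∃ e, δ d e = cs.simple i ∧ δ c e = δ c d * cs.simple i

/-- let `γ = (c₀, p₁, c₁, …, p_l, c_l)` be a gallery in a building `X` which has
the type `(i₁, …, i_l)` of a minimal gallery (a reduced word).  Then `γ` is minimal (its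
length `l` equals the gallery distance `cs.length (δ (c 0) (c l))` between its extremities)
if and only if for all `1 ≤ j ≤ l` one has `c_{j-1} = gate_{c₀}(p_j)` (i.e. `c_{j-1}` is the
alcove of `star(p_j)` closest to `c₀`) and `c_j ≠ c_{j-1}`. -/
theorem gallery_minimal_iff_gates
    {C B W : Type*} [Group W] {M : CoxeterMatrix B} (cs : CoxeterSystem M W)
    (δ : C → C → W) (hX : IsWeylBuilding cs δ)
    (l : ℕ) (c : Fin (l + 1) → C) (ι : Fin l → B)
    -- `γ` is a gallery: consecutive alcoves share the panel of type `ι j`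
    (hgal : ∀ j : Fin l, δ (c j.castSucc) (c j.succ) = 1 ∨
      δ (c j.castSucc) (c j.succ) = cs.simple (ι j))
    -- `γ` has the type of a minimal gallery
    (htype : cs.IsReduced (List.ofFn ι)) :
    cs.length (δ (c 0) (c (Fin.last l))) = l ↔
      ∀ j : Fin l, c j.succ ≠ c j.castSucc ∧
        ∀ f : C, (δ (c j.castSucc) f = 1 ∨ δ (c j.castSucc) f = cs.simple (ι j)) →
          cs.length (δ (c 0) (c j.castSucc)) ≤ cs.length (δ (c 0) f) := by
  -- prefixes of the reduced word have length equal to their word length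
  have hred : ∀ j : ℕ, j ≤ l → cs.length (cs.wordProd ((List.ofFn ι).take j)) = j := by
    intro j hj
    have h := htype.take j
    rwa [CoxeterSystem.IsReduced, List.length_take, List.length_ofFn,
      Nat.min_eq_left hj] at h
  have hstep : ∀ (j : ℕ) (hj : j < l),
      cs.wordProd ((List.ofFn ι).take (j + 1)) =
        cs.wordProd ((List.ofFn ι).take j) * cs.simple (ι ⟨j, hj⟩) := by
    intro j hj
    rw [List.take_succ]
    simp [List.getElem?_ofFn, hj, cs.wordProd_append]
  have h0 : c 0 = c ⟨0, Nat.succ_pos l⟩ := rfl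
  have hll : Fin.last l = ⟨l, Nat.lt_succ_self l⟩ := rfl
  -- the length of π (take (j+1)) forces the multiplication to be length-increasing
  have hlenmul : ∀ (j : ℕ) (hj : j < l),
      cs.length (cs.wordProd ((List.ofFn ι).take j) * cs.simple (ι ⟨j, hj⟩)) =
        cs.length (cs.wordProd ((List.ofFn ι).take j)) + 1 := by
    intro j hj
    rw [← hstep j hj, hred (j + 1) hj, hred j (le_of_lt hj)]
  constructor
  · intro hmin
    -- each step increases the length by at most one
    have hle1 : ∀ (j : ℕ) (hj : j < l),
        cs.length (δ (c 0) (c ⟨j + 1, by omega⟩)) ≤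
          cs.length (δ (c 0) (c ⟨j, by omega⟩)) + 1 := by
      intro j hj
      rcases hgal ⟨j, hj⟩ with h | h
      · have := (hX.eq_one_iff _ _).mp h
        have : c (⟨j, hj⟩ : Fin l).castSucc = c (⟨j, hj⟩ : Fin l).succ := this
        rw [show (⟨j + 1, by omega⟩ : Fin (l+1)) = (⟨j, hj⟩ : Fin l).succ from rfl, ← this]
        exact Nat.le_succ _
      · have e1 : c (⟨j, hj⟩ : Fin l).castSucc = c ⟨j, by omega⟩ := rfl
        have e2 : c (⟨j, hj⟩ : Fin l).succ = c ⟨j + 1, by omega⟩ := rfl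
        rcases hX.step (c 0) (c (⟨j, hj⟩ : Fin l).castSucc) (c (⟨j, hj⟩ : Fin l).succ)
          (ι ⟨j, hj⟩) h with h2 | h2 <;> rw [e1, e2] at h2 <;> rw [h2]
        · rcases cs.length_mul_simple (δ (c 0) (c ⟨j, by omega⟩)) (ι ⟨j, hj⟩)
            with h3 | h3 <;> omega
        · exact Nat.le_succ _
    -- length at step j is at most j
    have hlej : ∀ (j : ℕ) (hj : j ≤ l), cs.length (δ (c 0) (c ⟨j, by omega⟩)) ≤ j := by
      intro j
      induction j with
      | zero =>
        intro _
        rw [← h0, (hX.eq_one_iff (c 0) (c 0)).mpr rfl]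
        simp
      | succ j ih =>
        intro hj
        have := hle1 j (by omega)
        have := ih (by omega)
        omega
    -- length at step l is at most length at step j plus (l - j)
    have hup : ∀ (k j : ℕ) (h : j + k = l),
        cs.length (δ (c 0) (c (Fin.last l))) ≤
          cs.length (δ (c 0) (c ⟨j, by omega⟩)) + k := by
      intro k
      induction k with
      | zero =>
        intro j h
        have h2 : c (Fin.last l) = c ⟨j, by omega⟩ := by
          congr 1; ext; simp; omega
        have h3 : cs.length (δ (c 0) (c (Fin.last l))) =
            cs.length (δ (c 0) (c ⟨j, by omega⟩)) :=
          congrArg (fun x => cs.length (δ (c 0) x)) h2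
        omega
      | succ k ih =>
        intro j h
        have h1 := hle1 j (by omega)
        have h2 := ih (j + 1) (by omega)
        omega
    -- hence the length at step j is exactly j
    have hexactlen : ∀ (j : ℕ) (hj : j ≤ l), cs.length (δ (c 0) (c ⟨j, by omega⟩)) = j := by
      intro j hj
      have h1 := hup (l - j) j (by omega)
      have := hlej j hj
      omega
    -- the Weyl distance from c 0 to c j is the product of the prefix word
    have hexact : ∀ (j : ℕ) (hj : j ≤ l),
        δ (c 0) (c ⟨j, by omega⟩) = cs.wordProd ((List.ofFn ι).take j) := by
      intro j
      induction j with
      | zero =>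
        intro _
        rw [← h0]
        simp [(hX.eq_one_iff (c 0) (c 0)).mpr rfl]
      | succ j ih =>
        intro hj
        have hjl : j < l := by omega
        have ihv := ih (by omega)
        have hne : δ (c (⟨j, hjl⟩ : Fin l).castSucc) (c (⟨j, hjl⟩ : Fin l).succ) ≠ 1 := by
          intro h
          have hc : c (⟨j, hjl⟩ : Fin l).castSucc = c (⟨j, hjl⟩ : Fin l).succ :=
            (hX.eq_one_iff _ _).mp h
          have e1 := hexactlen j (by omega)
          have e2 := hexactlen (j + 1) hj
          rw [show (⟨j + 1, by omega⟩ : Fin (l + 1)) = (⟨j, hjl⟩ : Fin l).succ from rfl,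
            ← hc] at e2
          rw [show (⟨j, by omega⟩ : Fin (l + 1)) = (⟨j, hjl⟩ : Fin l).castSucc from rfl] at e1
          omega
        have hδ : δ (c (⟨j, hjl⟩ : Fin l).castSucc) (c (⟨j, hjl⟩ : Fin l).succ) =
            cs.simple (ι ⟨j, hjl⟩) := (hgal ⟨j, hjl⟩).resolve_left hne
        have hlen : cs.length (δ (c 0) (c (⟨j, hjl⟩ : Fin l).castSucc) * cs.simple (ι ⟨j, hjl⟩))
            = cs.length (δ (c 0) (c (⟨j, hjl⟩ : Fin l).castSucc)) + 1 := by
          rw [show c (⟨j, hjl⟩ : Fin l).castSucc = c ⟨j, by omega⟩ from rfl, ihv]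
          exact hlenmul j hjl
        have := hX.step_reduced (c 0) (c (⟨j, hjl⟩ : Fin l).castSucc)
          (c (⟨j, hjl⟩ : Fin l).succ) (ι ⟨j, hjl⟩) hδ hlen
        rw [show (⟨j + 1, by omega⟩ : Fin (l + 1)) = (⟨j, hjl⟩ : Fin l).succ from rfl, this,
          show c (⟨j, hjl⟩ : Fin l).castSucc = c ⟨j, by omega⟩ from rfl, ihv, hstep j hjl]
    intro j
    obtain ⟨jv, hjv⟩ := j
    constructor
    · intro hc
      have e1 := hexactlen jv (by omega)
      have e2 := hexactlen (jv + 1) (by omega)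
      rw [show (⟨jv + 1, by omega⟩ : Fin (l + 1)) = (⟨jv, hjv⟩ : Fin l).succ from rfl, hc] at e2
      rw [show (⟨jv, by omega⟩ : Fin (l + 1)) = (⟨jv, hjv⟩ : Fin l).castSucc from rfl] at e1
      omega
    · intro f hf
      have e1 := hexactlen jv (by omega)
      rw [show (⟨jv, by omega⟩ : Fin (l + 1)) = (⟨jv, hjv⟩ : Fin l).castSucc from rfl] at e1
      rcases hf with h | h
      · rw [(hX.eq_one_iff _ _).mp h]
      · rcases hX.step (c 0) (c (⟨jv, hjv⟩ : Fin l).castSucc) f (ι ⟨jv, hjv⟩) h with h2 | h2 <;>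
          rw [h2]
        · have := hexact jv (by omega)
          rw [show (⟨jv, by omega⟩ : Fin (l + 1)) = (⟨jv, hjv⟩ : Fin l).castSucc from rfl] at this
          rw [this, hlenmul jv hjv, ← this]
          omega
    -- backward direction
  · intro hgate
    have hexact : ∀ (j : ℕ) (hj : j ≤ l),
        δ (c 0) (c ⟨j, by omega⟩) = cs.wordProd ((List.ofFn ι).take j) := by
      intro j
      induction j with
      | zero =>
        intro _
        rw [← h0]
        simp [(hX.eq_one_iff (c 0) (c 0)).mpr rfl]
      | succ j ih =>
        intro hj
        have hjl : j < l := by omega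
        have ihv := ih (by omega)
        have hne : δ (c (⟨j, hjl⟩ : Fin l).castSucc) (c (⟨j, hjl⟩ : Fin l).succ) ≠ 1 := by
          intro h
          exact (hgate ⟨j, hjl⟩).1 ((hX.eq_one_iff _ _).mp h).symm
        have hδ : δ (c (⟨j, hjl⟩ : Fin l).castSucc) (c (⟨j, hjl⟩ : Fin l).succ) =
            cs.simple (ι ⟨j, hjl⟩) := (hgal ⟨j, hjl⟩).resolve_left hne
        have hlen : cs.length (δ (c 0) (c (⟨j, hjl⟩ : Fin l).castSucc) * cs.simple (ι ⟨j, hjl⟩))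
            = cs.length (δ (c 0) (c (⟨j, hjl⟩ : Fin l).castSucc)) + 1 := by
          rw [show c (⟨j, hjl⟩ : Fin l).castSucc = c ⟨j, by omega⟩ from rfl, ihv]
          exact hlenmul j hjl
        have := hX.step_reduced (c 0) (c (⟨j, hjl⟩ : Fin l).castSucc)
          (c (⟨j, hjl⟩ : Fin l).succ) (ι ⟨j, hjl⟩) hδ hlen
        rw [show (⟨j + 1, by omega⟩ : Fin (l + 1)) = (⟨j, hjl⟩ : Fin l).succ from rfl, this,
          show c (⟨j, hjl⟩ : Fin l).castSucc = c ⟨j, by omega⟩ from rfl, ihv, hstep j hjl]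
    have := hexact l le_rfl
    rw [hll, this]
    exact hred l le_rfl
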